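/- Let G be an undirected graph, S ⊆ E(G), and suppose every edge e ∈ S is subdivided so that e = {v,w} is replaced by a path v, v_e, w_e, w with {v_e, w_e} the new S-edge. Then for every set X of at most k vertices intersecting all S-cycles of the subdivided graph, the set X' obtained by replacing each subdivision vertex x_e ∈ X by the corresponding original endpoint x is also a set of at most k vertices intersecting all S-cycles; hence if a solution exists, a solution disjoint from all endpoints of S-edges exists. -/

import Mathlib

open SimpleGraph

private lemma cycle_two_incident {V : Type*} {G : SimpleGraph V} {x : V} (q : G.Walk x x)
    (hq : q.IsCycle) : ∃ a b, a ≠ b ∧ s(x, a) ∈ q.edges ∧ s(x, b) ∈ q.edges := by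
  cases q with
  | nil => exact absurd rfl hq.ne_nil
  | @cons _ y _ h p =>
    obtain ⟨b, h', p', hp'⟩ := SimpleGraph.Walk.exists_eq_cons_of_ne h.ne p.reverse
    have hbp : s(x, b) ∈ p.edges := by
      have : s(x, b) ∈ p.reverse.edges := by rw [hp']; simp
      simpa using this
    refine ⟨y, b, ?_, by simp, by simp [hbp]⟩
    rintro rfl
    have hnd := hq.edges_nodup
    simp [SimpleGraph.Walk.edges_cons] at hnd
    exact hnd.1 hbp

private lemma cycle_nbrs {W : Type*} {G' : SimpleGraph W} {x a₁ a₂ : W}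
    (hnb : ∀ a, G'.Adj x a → a = a₁ ∨ a = a₂) {w : W} (c : G'.Walk w w) (hc : c.IsCycle)
    (hx : x ∈ c.support) : a₁ ∈ c.support ∧ a₂ ∈ c.support := by
  classical
  set q := c.rotate x hx with hqdef
  have hq : q.IsCycle := hc.rotate hx
  obtain ⟨a, b, hab, ha, hb⟩ := cycle_two_incident q hq
  have hqs : ∀ z, z ∈ q.support → z ∈ c.support := by
    intro z hz
    rw [SimpleGraph.Walk.support_eq_cons] at hz
    rcases List.mem_cons.mp hz with rfl | hz
    · exact hx
    · have := (SimpleGraph.Walk.support_rotate c x hx).mem_iff.mp hz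
      exact List.mem_of_mem_tail this
  have hsa : a ∈ c.support := hqs a (q.snd_mem_support_of_mem_edges ha)
  have hsb : b ∈ c.support := hqs b (q.snd_mem_support_of_mem_edges hb)
  have hna := hnb a (q.adj_of_mem_edges ha)
  have hnbb := hnb b (q.adj_of_mem_edges hb)
  rcases hna with rfl | rfl <;> rcases hnbb with rfl | rfl
  · exact absurd rfl hab
  · exact ⟨hsa, hsb⟩
  · exact ⟨hsb, hsa⟩
  · exact absurd rfl hab

private lemma nbr_false {V ι : Type} (G : SimpleGraph V) (S : Set (Sym2 V)) (ep : ι → V × V)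
    (i : ι) (a : V ⊕ ι × Bool)
    (hadj : (SimpleGraph.fromRel (fun a b =>
      (∃ u v : V, a = Sum.inl u ∧ b = Sum.inl v ∧ G.Adj u v ∧ s(u, v) ∉ S) ∨
      (∃ i : ι, a = Sum.inl (ep i).1 ∧ b = Sum.inr (i, false)) ∨
      (∃ i : ι, a = Sum.inl (ep i).2 ∧ b = Sum.inr (i, true)) ∨
      (∃ i : ι, a = Sum.inr (i, false) ∧ b = Sum.inr (i, true)))).Adj (Sum.inr (i, false)) a) :
    a = Sum.inl (ep i).1 ∨ a = Sum.inr (i, true) := by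
  rw [SimpleGraph.fromRel_adj] at hadj
  obtain ⟨hne, h | h⟩ := hadj <;>
    rcases h with ⟨u, v, h1, h2, -, -⟩ | ⟨j, h1, h2⟩ | ⟨j, h1, h2⟩ | ⟨j, h1, h2⟩ <;>
    simp_all

private lemma nbr_true {V ι : Type} (G : SimpleGraph V) (S : Set (Sym2 V)) (ep : ι → V × V)
    (i : ι) (a : V ⊕ ι × Bool)
    (hadj : (SimpleGraph.fromRel (fun a b =>
      (∃ u v : V, a = Sum.inl u ∧ b = Sum.inl v ∧ G.Adj u v ∧ s(u, v) ∉ S) ∨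
      (∃ i : ι, a = Sum.inl (ep i).1 ∧ b = Sum.inr (i, false)) ∨
      (∃ i : ι, a = Sum.inl (ep i).2 ∧ b = Sum.inr (i, true)) ∨
      (∃ i : ι, a = Sum.inr (i, false) ∧ b = Sum.inr (i, true)))).Adj (Sum.inr (i, true)) a) :
    a = Sum.inl (ep i).2 ∨ a = Sum.inr (i, false) := by
  rw [SimpleGraph.fromRel_adj] at hadj
  obtain ⟨hne, h | h⟩ := hadj <;>
    rcases h with ⟨u, v, h1, h2, -, -⟩ | ⟨j, h1, h2⟩ | ⟨j, h1, h2⟩ | ⟨j, h1, h2⟩ <;>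
    simp_all


/-- Subdividing each `S`-edge `{v,w}` into `v, v_e, w_e, w` (with `{v_e, w_e}` the new
`S`-edge): if `X` is a set of at most `k` vertices hitting all `S`-cycles of the
subdivided graph, then the set `X'` obtained by replacing each subdivision vertex by its
corresponding original endpoint also has at most `k` vertices and hits all `S`-cycles;
hence if a solution exists, a solution disjoint from all endpoints of the new `S`-edges
exists. The `S`-edges of `G` are enumerated by `ι` via `ep`, and the subdivided graph
lives on `V ⊕ ι × Bool` (with `(i, false)`, `(i, true)` the two subdivision vertices of
edge `i`). -/
theorem stmt13 {V ι : Type} [Fintype V] [Fintype ι] [DecidableEq V] (G : SimpleGraph V)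
    (S : Set (Sym2 V)) (hS : S ⊆ G.edgeSet) (ep : ι → V × V)
    (hep : ∀ i, s((ep i).1, (ep i).2) ∈ S)
    (hepinj : Function.Injective (fun i => s((ep i).1, (ep i).2)))
    (hepsurj : ∀ e ∈ S, ∃ i, e = s((ep i).1, (ep i).2)) (k : ℕ) :
    letI W := V ⊕ ι × Bool
    letI G' : SimpleGraph W := SimpleGraph.fromRel (fun a b =>
      (∃ u v : V, a = Sum.inl u ∧ b = Sum.inl v ∧ G.Adj u v ∧ s(u, v) ∉ S) ∨
      (∃ i : ι, a = Sum.inl (ep i).1 ∧ b = Sum.inr (i, false)) ∨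
      (∃ i : ι, a = Sum.inl (ep i).2 ∧ b = Sum.inr (i, true)) ∨
      (∃ i : ι, a = Sum.inr (i, false) ∧ b = Sum.inr (i, true)))
    letI Snew : Set (Sym2 W) :=
      {e | ∃ i : ι, e = s(Sum.inr (i, false), Sum.inr (i, true))}
    letI Hits : Set W → Prop := fun X =>
      ∀ (w : W) (c : G'.Walk w w), c.IsCycle → (∃ e ∈ c.edges, e ∈ Snew) →
        ∃ x ∈ X, x ∈ c.support
    ∀ X : Set W, X.ncard ≤ k → Hits X →
      letI X' : Set W := {w | ∃ v : V, w = Sum.inl v ∧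
        (Sum.inl v ∈ X ∨ (∃ i : ι, v = (ep i).1 ∧ Sum.inr (i, false) ∈ X) ∨
          (∃ i : ι, v = (ep i).2 ∧ Sum.inr (i, true) ∈ X))}
      X'.ncard ≤ k ∧ Hits X' ∧ (∀ w ∈ X', ∃ v : V, w = Sum.inl v) := by
  intro X hXk hHits
  refine ⟨?_, ?_, ?_⟩
  · have himg : {w : V ⊕ ι × Bool | ∃ v : V, w = Sum.inl v ∧
        (Sum.inl v ∈ X ∨ (∃ i : ι, v = (ep i).1 ∧ Sum.inr (i, false) ∈ X) ∨
          (∃ i : ι, v = (ep i).2 ∧ Sum.inr (i, true) ∈ X))} =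
        (Sum.elim Sum.inl (fun p : ι × Bool =>
          if p.2 then Sum.inl (ep p.1).2 else Sum.inl (ep p.1).1)) '' X := by
      ext w
      constructor
      · rintro ⟨v, rfl, (h | ⟨i, rfl, h⟩ | ⟨i, rfl, h⟩)⟩
        · exact ⟨Sum.inl v, h, rfl⟩
        · exact ⟨Sum.inr (i, false), h, by simp⟩
        · exact ⟨Sum.inr (i, true), h, by simp⟩
      · rintro ⟨z, hz, rfl⟩
        rcases z with v | ⟨i, b⟩
        · exact ⟨v, rfl, Or.inl hz⟩
        · cases b
          · exact ⟨(ep i).1, by simp, Or.inr (Or.inl ⟨i, rfl, hz⟩)⟩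
          · exact ⟨(ep i).2, by simp, Or.inr (Or.inr ⟨i, rfl, hz⟩)⟩
    rw [himg]
    exact le_trans (Set.ncard_image_le X.toFinite) hXk
  · intro w c hc hcS
    obtain ⟨x, hxX, hxsup⟩ := hHits w c hc hcS
    rcases x with v | ⟨i, b⟩
    · exact ⟨Sum.inl v, ⟨v, rfl, Or.inl hxX⟩, hxsup⟩
    · cases b
      · have := cycle_nbrs (fun a ha => nbr_false G S ep i a ha) c hc hxsup
        exact ⟨Sum.inl (ep i).1, ⟨(ep i).1, rfl, Or.inr (Or.inl ⟨i, rfl, hxX⟩)⟩, this.1⟩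
      · have := cycle_nbrs (fun a ha => nbr_true G S ep i a ha) c hc hxsup
        exact ⟨Sum.inl (ep i).2, ⟨(ep i).2, rfl, Or.inr (Or.inr ⟨i, rfl, hxX⟩)⟩, this.1⟩
  · rintro w ⟨v, rfl, -⟩
    exact ⟨v, rfl⟩
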